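/- Let ξ > 0 be such that D_ξ := DᵀD − ξ²I is invertible. Then the function h_ξ(λ) := det H_ξ(λ) is even: for all λ ∈ ℂ, det H_ξ(−λ) = det H_ξ(λ). -/

import Mathlib

open Matrix Complex

noncomputable section

variable {n nu ny m : ℕ}

/-- `D_ξ = Dᵀ D − ξ² I`. -/
def Dxi (D : Matrix (Fin ny) (Fin nu) ℝ) (ξ : ℝ) : Matrix (Fin nu) (Fin nu) ℝ :=
  Dᵀ * D - ξ ^ 2 • (1 : Matrix (Fin nu) (Fin nu) ℝ)

/-- `(Dᵀ)_ξ = D Dᵀ − ξ² I`, the matrix denoted `D_ξ^{-T}`-inverse base in the paper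
(the only dimensionally consistent reading of the `(2,1)` block of `M₀`).
Note that it is invertible iff `D_ξ` is (for `ξ ≠ 0`), since `DᵀD` and `DDᵀ` have the
same nonzero eigenvalues. -/
def DxiT (D : Matrix (Fin ny) (Fin nu) ℝ) (ξ : ℝ) : Matrix (Fin ny) (Fin ny) ℝ :=
  D * Dᵀ - ξ ^ 2 • (1 : Matrix (Fin ny) (Fin ny) ℝ)

/-- The block matrix `M₀`. -/
def Mzero (A0 : Matrix (Fin n) (Fin n) ℝ) (B : Matrix (Fin n) (Fin nu) ℝ)
    (C : Matrix (Fin ny) (Fin n) ℝ) (D : Matrix (Fin ny) (Fin nu) ℝ) (ξ : ℝ) :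
    Matrix (Fin n ⊕ Fin n) (Fin n ⊕ Fin n) ℝ :=
  fromBlocks (A0 - B * (Dxi D ξ)⁻¹ * Dᵀ * C) (-(B * (Dxi D ξ)⁻¹ * Bᵀ))
    (ξ ^ 2 • (Cᵀ * (DxiT D ξ)⁻¹ * C)) (-A0ᵀ + Cᵀ * D * (Dxi D ξ)⁻¹ * Bᵀ)

/-- The block matrix `Mᵢ` for `1 ≤ i ≤ m`. -/
def Mpos (Ai : Matrix (Fin n) (Fin n) ℝ) : Matrix (Fin n ⊕ Fin n) (Fin n ⊕ Fin n) ℝ :=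
  fromBlocks Ai 0 0 0

/-- The block matrix `M₋ᵢ` for `1 ≤ i ≤ m`. -/
def Mneg (Ai : Matrix (Fin n) (Fin n) ℝ) : Matrix (Fin n ⊕ Fin n) (Fin n ⊕ Fin n) ℝ :=
  fromBlocks 0 0 0 (-Aiᵀ)

/-- `H_ξ(λ) = λI − M₀ − Σᵢ (Mᵢ e^{−λτᵢ} + M₋ᵢ e^{λτᵢ})`. -/
def Hxi (A0 : Matrix (Fin n) (Fin n) ℝ) (A : Fin m → Matrix (Fin n) (Fin n) ℝ)
    (B : Matrix (Fin n) (Fin nu) ℝ) (C : Matrix (Fin ny) (Fin n) ℝ)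
    (D : Matrix (Fin ny) (Fin nu) ℝ) (τ : Fin m → ℝ) (ξ : ℝ) (lam : ℂ) :
    Matrix (Fin n ⊕ Fin n) (Fin n ⊕ Fin n) ℂ :=
  lam • (1 : Matrix (Fin n ⊕ Fin n) (Fin n ⊕ Fin n) ℂ)
    - (Mzero A0 B C D ξ).map Complex.ofReal
    - ∑ i : Fin m, (Complex.exp (-lam * (τ i : ℂ)) • (Mpos (A i)).map Complex.ofReal
        + Complex.exp (lam * (τ i : ℂ)) • (Mneg (A i)).map Complex.ofReal)

/-- `A(λ) = λI − A₀ − Σᵢ Aᵢ e^{−λτᵢ}`. -/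
def Amat (A0 : Matrix (Fin n) (Fin n) ℝ) (A : Fin m → Matrix (Fin n) (Fin n) ℝ)
    (τ : Fin m → ℝ) (lam : ℂ) : Matrix (Fin n) (Fin n) ℂ :=
  lam • (1 : Matrix (Fin n) (Fin n) ℂ) - A0.map Complex.ofReal
    - ∑ i : Fin m, Complex.exp (-lam * (τ i : ℂ)) • (A i).map Complex.ofReal

/-- The transfer function `G(λ) = C A(λ)⁻¹ B + D`. -/
def Gmat (A0 : Matrix (Fin n) (Fin n) ℝ) (A : Fin m → Matrix (Fin n) (Fin n) ℝ)
    (B : Matrix (Fin n) (Fin nu) ℝ) (C : Matrix (Fin ny) (Fin n) ℝ)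
    (D : Matrix (Fin ny) (Fin nu) ℝ) (τ : Fin m → ℝ) (lam : ℂ) :
    Matrix (Fin ny) (Fin nu) ℂ :=
  C.map Complex.ofReal * (Amat A0 A τ lam)⁻¹ * B.map Complex.ofReal + D.map Complex.ofReal

/-- `τ_max`, the maximum of the delays. -/
def tauMax [NeZero m] (τ : Fin m → ℝ) : ℝ :=
  Finset.univ.sup' Finset.univ_nonempty τ

/-- `λ` is an eigenvalue of the infinite-dimensional operator `L_ξ`: there is a continuously
differentiable, not identically zero function `u : [−τ_max, τ_max] → ℂ^{2n}` with
`u′(t) = λ u(t)` on the interval and `u′(0) = M₀ u(0) + Σᵢ (Mᵢ u(−τᵢ) + M₋ᵢ u(τᵢ))`. -/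
def IsEigLxi [NeZero m] (A0 : Matrix (Fin n) (Fin n) ℝ) (A : Fin m → Matrix (Fin n) (Fin n) ℝ)
    (B : Matrix (Fin n) (Fin nu) ℝ) (C : Matrix (Fin ny) (Fin n) ℝ)
    (D : Matrix (Fin ny) (Fin nu) ℝ) (τ : Fin m → ℝ) (ξ : ℝ) (lam : ℂ) : Prop :=
  ∃ u : ℝ → (Fin n ⊕ Fin n → ℂ),
    (∀ t ∈ Set.Icc (-(tauMax τ)) (tauMax τ),
      HasDerivWithinAt u (lam • u t) (Set.Icc (-(tauMax τ)) (tauMax τ)) t) ∧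
    (∃ t ∈ Set.Icc (-(tauMax τ)) (tauMax τ), u t ≠ 0) ∧
    lam • u 0 = (Mzero A0 B C D ξ).map Complex.ofReal *ᵥ u 0
      + ∑ i : Fin m, ((Mpos (A i)).map Complex.ofReal *ᵥ u (-(τ i))
          + (Mneg (A i)).map Complex.ofReal *ᵥ u (τ i))


/-- Conjugation by the symplectic `J` sends a Hamiltonian block matrix to minus its
transpose. -/
lemma conj_hamiltonian {R : Type*} [CommRing R] {k : ℕ}
    (X Y Z W : Matrix (Fin k) (Fin k) R) (hY : Yᵀ = Y) (hZ : Zᵀ = Z) (hW : W = -Xᵀ) :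
    (fromBlocks 0 1 (-1) 0 : Matrix (Fin k ⊕ Fin k) (Fin k ⊕ Fin k) R) *
      fromBlocks X Y Z W * (fromBlocks 0 (-1) 1 0) = -(fromBlocks X Y Z W)ᵀ := by
  have : -(fromBlocks X Y Z W)ᵀ = fromBlocks (-Xᵀ) (-Zᵀ) (-Yᵀ) (-Wᵀ) := by
    rw [Matrix.fromBlocks_transpose]
    ext (i | i) (j | j) <;> simp [Matrix.fromBlocks]
  rw [this, Matrix.fromBlocks_multiply, Matrix.fromBlocks_multiply, hY, hZ, hW]
  congr 1 <;> simp

/-- `h_ξ(λ) = det H_ξ(λ)` is an even function. -/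
theorem det_Hxi_even [NeZero n] [NeZero nu] [NeZero ny] [NeZero m]
    (A0 : Matrix (Fin n) (Fin n) ℝ) (A : Fin m → Matrix (Fin n) (Fin n) ℝ)
    (B : Matrix (Fin n) (Fin nu) ℝ) (C : Matrix (Fin ny) (Fin n) ℝ)
    (D : Matrix (Fin ny) (Fin nu) ℝ) (τ : Fin m → ℝ)
    (ξ : ℝ) (hξ : 0 < ξ) (hD : IsUnit (Dxi D ξ)) :
    ∀ lam : ℂ, (Hxi A0 A B C D τ ξ (-lam)).det = (Hxi A0 A B C D τ ξ lam).det := by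
  intro lam
  classical
  set J : Matrix (Fin n ⊕ Fin n) (Fin n ⊕ Fin n) ℂ := fromBlocks 0 1 (-1) 0 with hJ
  set J' : Matrix (Fin n ⊕ Fin n) (Fin n ⊕ Fin n) ℂ := fromBlocks 0 (-1) 1 0 with hJ'
  have hJJ' : J * J' = 1 := by
    rw [hJ, hJ', Matrix.fromBlocks_multiply]
    simp [← Matrix.fromBlocks_one]
  -- symmetry of the relevant real matrices
  have hDxiSymm : (Dxi D ξ)ᵀ = Dxi D ξ := by
    simp [Dxi, Matrix.transpose_sub, Matrix.transpose_smul]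
  have hDxiInvSymm : ((Dxi D ξ)⁻¹)ᵀ = (Dxi D ξ)⁻¹ := by
    rw [Matrix.transpose_nonsing_inv, hDxiSymm]
  have hDxiTSymm : (DxiT D ξ)ᵀ = DxiT D ξ := by
    simp [DxiT, Matrix.transpose_sub, Matrix.transpose_smul]
  have hDxiTInvSymm : ((DxiT D ξ)⁻¹)ᵀ = (DxiT D ξ)⁻¹ := by
    rw [Matrix.transpose_nonsing_inv, hDxiTSymm]
  -- conjugation identities for the pieces
  have hMz : J * (Mzero A0 B C D ξ).map Complex.ofReal * J'
      = -((Mzero A0 B C D ξ).map Complex.ofReal)ᵀ := by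
    rw [Mzero, Matrix.fromBlocks_map, hJ, hJ']
    apply conj_hamiltonian
    · rw [← Matrix.transpose_map]
      congr 1
      simp only [Matrix.transpose_neg, Matrix.transpose_mul, Matrix.transpose_transpose,
        hDxiInvSymm]
      rw [Matrix.mul_assoc]
    · rw [← Matrix.transpose_map]
      congr 1
      simp only [Matrix.transpose_smul, Matrix.transpose_mul, Matrix.transpose_transpose,
        hDxiTInvSymm]
      rw [Matrix.mul_assoc]
    · have hreal : (-A0ᵀ + Cᵀ * D * (Dxi D ξ)⁻¹ * Bᵀ)
          = -(A0 - B * (Dxi D ξ)⁻¹ * Dᵀ * C)ᵀ := by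
        simp only [Matrix.transpose_sub, Matrix.transpose_mul, Matrix.transpose_transpose,
          hDxiInvSymm, neg_sub, Matrix.mul_assoc]
        abel
      rw [hreal, ← Matrix.transpose_map]
      ext i j
      simp
  have hMp : ∀ i : Fin m, J * (Mpos (A i)).map Complex.ofReal * J'
      = -((Mneg (A i)).map Complex.ofReal)ᵀ := by
    intro i
    rw [Mpos, Mneg, Matrix.fromBlocks_map, Matrix.fromBlocks_map, hJ, hJ',
      Matrix.fromBlocks_multiply, Matrix.fromBlocks_multiply, Matrix.fromBlocks_transpose]
    ext (a | a) (b | b) <;> simp [Matrix.fromBlocks]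
  have hMn : ∀ i : Fin m, J * (Mneg (A i)).map Complex.ofReal * J'
      = -((Mpos (A i)).map Complex.ofReal)ᵀ := by
    intro i
    rw [Mpos, Mneg, Matrix.fromBlocks_map, Matrix.fromBlocks_map, hJ, hJ',
      Matrix.fromBlocks_multiply, Matrix.fromBlocks_multiply, Matrix.fromBlocks_transpose]
    ext (a | a) (b | b) <;> simp [Matrix.fromBlocks]
  -- key conjugation identity for H
  have key : J * Hxi A0 A B C D τ ξ lam * J' = -(Hxi A0 A B C D τ ξ (-lam))ᵀ := by
    rw [Hxi, Hxi]
    simp only [Matrix.mul_sub, Matrix.sub_mul, Matrix.mul_add, Matrix.add_mul,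
      Finset.mul_sum, Finset.sum_mul, mul_smul_comm, smul_mul_assoc,
      Matrix.mul_one, Matrix.one_mul, hJJ', hMz, hMp, hMn,
      Matrix.transpose_sub, Matrix.transpose_add, Matrix.transpose_smul,
      Matrix.transpose_one, Matrix.transpose_sum, neg_neg, neg_mul,
      neg_sub, smul_neg, sub_neg_eq_add, neg_add_rev]
    have hsum : ∑ x : Fin m,
          (-(Complex.exp (-(lam * (τ x : ℂ))) • ((Mneg (A x)).map Complex.ofReal)ᵀ) +
            -(Complex.exp (lam * (τ x : ℂ)) • ((Mpos (A x)).map Complex.ofReal)ᵀ))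
        = -∑ x : Fin m,
          (Complex.exp (lam * (τ x : ℂ)) • ((Mpos (A x)).map Complex.ofReal)ᵀ +
            Complex.exp (-(lam * (τ x : ℂ))) • ((Mneg (A x)).map Complex.ofReal)ᵀ) := by
      rw [← Finset.sum_neg_distrib]
      exact Finset.sum_congr rfl fun i _ => by abel
    rw [hsum, neg_smul]
    abel
  -- now take determinants
  have hdetJ : J.det * J'.det = 1 := by rw [← Matrix.det_mul, hJJ', Matrix.det_one]
  have hdet := congrArg Matrix.det key
  rw [Matrix.det_mul, Matrix.det_mul, Matrix.det_neg, Matrix.det_transpose] at hdet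
  have hcard : Fintype.card (Fin n ⊕ Fin n) = n + n := by simp
  have hpow : (-1 : ℂ) ^ Fintype.card (Fin n ⊕ Fin n) = 1 := by
    rw [hcard]; exact (Even.neg_one_pow ⟨n, rfl⟩)
  rw [hpow, one_mul] at hdet
  calc (Hxi A0 A B C D τ ξ (-lam)).det
      = J.det * (Hxi A0 A B C D τ ξ lam).det * J'.det := hdet.symm
    _ = (Hxi A0 A B C D τ ξ lam).det * (J.det * J'.det) := by ring
    _ = (Hxi A0 A B C D τ ξ lam).det := by rw [hdetJ, mul_one]
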